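/- Let E be a finite directed graph without sinks in which every loop has an exit, let k ≥ 1, and let σ be a permutation of E^k preserving sources and ranges, with associated maps f_e as above. Then the following are equivalent: (i) [Condition (b)] there exists m ≥ 1 such that for every sequence e_1, …, e_m ∈ E¹, the composition f_{e_1} ∘ ⋯ ∘ f_{e_m} (with f_{e_m} applied first, defined wherever the composition makes sense) either has empty domain, or is defined on all of E^{k-1}_{*,r(e_m)} and its range consists of exactly one element; (ii) there exists a partial order ≤ on the set of pairs {(α, β) : α, β ∈ E^{k-1}, s(α) = s(β)} such that (a) the minimal elements of ≤ are exactly the diagonal pairs (α, α) together with all pairs (α, β) with s(α) = s(β) = v for vertices v receiving no edge, and (b) for every e ∈ E¹ and all α ≠ β in E^{k-1}_{*,r(e)}, one has (f_e(α), f_e(β)) < (α, β) (strict inequality). -/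

import Mathlib

structure FinDirGraph where
  V : Type
  E : Type
  [instFV : Fintype V]
  [instFE : Fintype E]
  [instDV : DecidableEq V]
  [instDE : DecidableEq E]
  r : E → V
  s : E → V

attribute [instance] FinDirGraph.instFV FinDirGraph.instFE FinDirGraph.instDV FinDirGraph.instDE

namespace FinDirGraph

variable (G : FinDirGraph)

def IsPathFrom : G.V → List G.E → Prop
  | _, [] => True
  | v, e :: l => G.s e = v ∧ IsPathFrom (G.r e) l

def rangeFrom : G.V → List G.E → G.V
  | v, [] => v
  | _, e :: l => rangeFrom (G.r e) l

structure Path where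
  src : G.V
  edges : List G.E
  ok : G.IsPathFrom src edges

variable {G}

def Path.len (μ : G.Path) : ℕ := μ.edges.length

def Path.rng (μ : G.Path) : G.V := G.rangeFrom μ.src μ.edges

variable (G)

def NoSinks : Prop := ∀ v : G.V, ∃ e : G.E, G.s e = v

def NoSources : Prop := ∀ v : G.V, ∃ e : G.E, G.r e = v

def EveryLoopHasExit : Prop :=
  ∀ μ : G.Path, μ.edges ≠ [] → μ.src = μ.rng →
    ∃ e ∈ μ.edges, ∃ f g : G.E, f ≠ g ∧ G.s f = G.s e ∧ G.s g = G.s e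

variable {G}

/-- Prepending an edge to a path. -/
def Path.cons (e : G.E) (μ : G.Path) (h : μ.src = G.r e) : G.Path :=
  ⟨G.s e, e :: μ.edges, ⟨rfl, h ▸ μ.ok⟩⟩

lemma isPathFrom_snoc : ∀ (l : List G.E) (v : G.V) (g : G.E),
    G.IsPathFrom v l → G.s g = G.rangeFrom v l → G.IsPathFrom v (l ++ [g])
  | [], _, _, _, h => ⟨h, trivial⟩
  | e :: t, _, g, hp, h => ⟨hp.1, isPathFrom_snoc t (G.r e) g hp.2 h⟩

/-- Appending an edge to a path. -/
def Path.snoc (μ : G.Path) (g : G.E) (h : G.s g = μ.rng) : G.Path :=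
  ⟨μ.src, μ.edges ++ [g], isPathFrom_snoc μ.edges μ.src g μ.ok h⟩

variable (G)

/-- The set `E^k` of paths of length `k`, as a type. -/
def PathOfLen (k : ℕ) := {μ : G.Path // μ.len = k}

variable {G}

lemma len_cons_eq {k : ℕ} (hk : 1 ≤ k) {e : G.E} {α : G.Path}
    (hlen : α.len = k - 1) (hsrc : α.src = G.r e) : (Path.cons e α hsrc).len = k := by
  simp only [Path.len, Path.cons, List.length_cons] at *
  omega

/-- The relational graph of the map `f_e : E^{k-1}_{*,r(e)} → E^{k-1}_{*,s(e)}`,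
`f_e(α) = β` iff `σ(eα) = βg` for some edge `g`. -/
def FRel {k : ℕ} (hk : 1 ≤ k) (σ : Equiv.Perm (PathOfLen G k)) (e : G.E)
    (α β : G.Path) : Prop :=
  β.len = k - 1 ∧
    ∃ (hlen : α.len = k - 1) (hsrc : α.src = G.r e) (g : G.E) (hg : G.s g = β.rng),
      (σ ⟨Path.cons e α hsrc, len_cons_eq hk hlen hsrc⟩).val = Path.snoc β g hg

/-- The relational graph of the composition `f_{e₁} ∘ ⋯ ∘ f_{e_m}` (with `f_{e_m}`
applied first), for the list `[e₁, …, e_m]`. -/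
def FRelComp {k : ℕ} (hk : 1 ≤ k) (σ : Equiv.Perm (PathOfLen G k)) :
    List G.E → G.Path → G.Path → Prop
  | [], α, β => α = β
  | e :: t, α, β => ∃ γ, FRelComp hk σ t α γ ∧ FRel hk σ e γ β

/-- Condition (b): some length `m` such that every `m`-fold composition of
the maps `f_e` has empty domain, or full domain and singleton range. -/
def ConditionB {k : ℕ} (hk : 1 ≤ k) (σ : Equiv.Perm (PathOfLen G k)) : Prop :=
  ∃ m : ℕ, 1 ≤ m ∧ ∀ es : List G.E, es.length = m → ∀ elast, es.getLast? = some elast →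
    ((∀ α β, ¬ FRelComp hk σ es α β) ∨
      ((∀ α : G.Path, α.len = k - 1 → α.src = G.r elast → ∃ β, FRelComp hk σ es α β) ∧
        (∃ β₀, ∀ α β, FRelComp hk σ es α β → β = β₀)))

/-- The relational graph of the partial map `f_{e,g}` on pairs of distinct paths. -/
def FRel2 {k : ℕ} (hk : 1 ≤ k) (σ : Equiv.Perm (PathOfLen G k)) (e g : G.E)
    (p q : G.Path × G.Path) : Prop :=
  p.1 ≠ p.2 ∧ q.1 ≠ q.2 ∧
    ∃ (h1 : p.1.len = k - 1) (h2 : p.2.len = k - 1)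
      (hs1 : p.1.src = G.r e) (hs2 : p.2.src = G.r g)
      (h : G.E) (hg1 : G.s h = q.1.rng) (hg2 : G.s h = q.2.rng),
      (σ ⟨Path.cons e p.1 hs1, len_cons_eq hk h1 hs1⟩).val = Path.snoc q.1 h hg1 ∧
      (σ ⟨Path.cons g p.2 hs2, len_cons_eq hk h2 hs2⟩).val = Path.snoc q.2 h hg2

/-- The relational graph of the composition `f_{e₁,g₁} ∘ ⋯ ∘ f_{e_m,g_m}`. -/
def FRel2Comp {k : ℕ} (hk : 1 ≤ k) (σ : Equiv.Perm (PathOfLen G k)) :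
    List (G.E × G.E) → G.Path × G.Path → G.Path × G.Path → Prop
  | [], p, q => p = q
  | eg :: t, p, q => ∃ o, FRel2Comp hk σ t p o ∧ FRel2 hk σ eg.1 eg.2 o q

/-- Condition (d): some length `m` such that every `m`-fold composition of the
partial maps `f_{e,g}` has empty domain. -/
def ConditionD {k : ℕ} (hk : 1 ≤ k) (σ : Equiv.Perm (PathOfLen G k)) : Prop :=
  ∃ m : ℕ, 1 ≤ m ∧ ∀ L : List (G.E × G.E), L.length = m →
    ∀ p q, ¬ FRel2Comp hk σ L p q

variable (G)

/-- Pairs of paths of length `k-1` with a common source. -/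
def PairB (k : ℕ) :=
  {p : G.Path × G.Path // p.1.len = k - 1 ∧ p.2.len = k - 1 ∧ p.1.src = p.2.src}

/-- `Ψ`: pairs of distinct paths of length `k-1`. -/
def PairD (k : ℕ) :=
  {p : G.Path × G.Path // p.1.len = k - 1 ∧ p.2.len = k - 1 ∧ p.1 ≠ p.2}


section Lemma61Aux

variable {G : FinDirGraph}

lemma Path.ext' {μ ν : G.Path} (h1 : μ.src = ν.src) (h2 : μ.edges = ν.edges) : μ = ν := by
  cases μ; cases ν; simp_all

lemma isPathFrom_of_snoc : ∀ (l : List G.E) (v : G.V) (g : G.E),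
    G.IsPathFrom v (l ++ [g]) → G.IsPathFrom v l ∧ G.s g = G.rangeFrom v l
  | [], v, g, h => ⟨trivial, h.1⟩
  | e :: t, v, g, h =>
    ⟨⟨h.1, (isPathFrom_of_snoc t (G.r e) g h.2).1⟩, (isPathFrom_of_snoc t (G.r e) g h.2).2⟩

variable {k : ℕ} (hk : 1 ≤ k) (σ : Equiv.Perm (PathOfLen G k))

lemma FRelComp_nil (α β : G.Path) : FRelComp hk σ [] α β ↔ α = β := Iff.rfl

lemma FRelComp_cons (e : G.E) (t : List G.E) (α β : G.Path) :
    FRelComp hk σ (e :: t) α β ↔ ∃ γ, FRelComp hk σ t α γ ∧ FRel hk σ e γ β := Iff.rfl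

lemma FRel_unique {e : G.E} {α β β' : G.Path}
    (h : FRel hk σ e α β) (h' : FRel hk σ e α β') : β = β' := by
  obtain ⟨hβ, hlen, hsrc, g, hg, heq⟩ := h
  obtain ⟨hβ', hlen', hsrc', g', hg', heq'⟩ := h'
  have hss : Path.snoc β g hg = Path.snoc β' g' hg' := heq.symm.trans heq'
  have hs0 := congrArg (fun p : G.Path => p.src) hss
  have he0 := congrArg (fun p : G.Path => p.edges) hss
  have hs : β.src = β'.src := hs0
  have he : β.edges ++ [g] = β'.edges ++ [g'] := he0
  exact Path.ext' hs (List.append_inj he (hβ.trans hβ'.symm)).1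

lemma FRel_src (hσs : ∀ μ, (σ μ).val.src = μ.val.src) {e : G.E} {α β : G.Path}
    (h : FRel hk σ e α β) : β.src = G.s e := by
  obtain ⟨hβ, hlen, hsrc, g, hg, heq⟩ := h
  have h2 := hσs ⟨Path.cons e α hsrc, len_cons_eq hk hlen hsrc⟩
  rw [heq] at h2
  exact h2

lemma exists_FRel (hσs : ∀ μ, (σ μ).val.src = μ.val.src) (e : G.E) (α : G.Path)
    (hlen : α.len = k - 1) (hsrc : α.src = G.r e) : ∃ β, FRel hk σ e α β := by
  set μ := (σ ⟨Path.cons e α hsrc, len_cons_eq hk hlen hsrc⟩ : PathOfLen G k) with hμdef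
  have hlenμ : μ.val.len = k := μ.prop
  have hne : μ.val.edges ≠ [] := by
    intro h
    rw [Path.len, h] at hlenμ
    simp at hlenμ
    omega
  rcases (List.eq_nil_or_concat μ.val.edges).resolve_left hne with ⟨l, g, hlg⟩
  rw [List.concat_eq_append] at hlg
  have hok : G.IsPathFrom μ.val.src (l ++ [g]) := hlg ▸ μ.val.ok
  obtain ⟨h1, h2⟩ := isPathFrom_of_snoc l μ.val.src g hok
  refine ⟨⟨μ.val.src, l, h1⟩, ?_, hlen, hsrc, g, h2, ?_⟩
  · show l.length = k - 1
    have h3 : μ.val.edges.length = k := hlenμ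
    rw [hlg] at h3
    simp at h3
    omega
  · exact Path.ext' rfl hlg

lemma comp_append : ∀ (L₁ L₂ : List G.E) (α β : G.Path),
    FRelComp hk σ (L₁ ++ L₂) α β ↔ ∃ γ, FRelComp hk σ L₂ α γ ∧ FRelComp hk σ L₁ γ β := by
  intro L₁
  induction L₁ with
  | nil =>
    intro L₂ α β
    constructor
    · intro h; exact ⟨β, h, rfl⟩
    · rintro ⟨γ, h1, h2⟩; exact (show γ = β from h2) ▸ h1
  | cons e t ih =>
    intro L₂ α β
    rw [List.cons_append, FRelComp_cons]
    constructor
    · rintro ⟨δ, hδ, he⟩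
      obtain ⟨γ, ha, hb⟩ := (ih L₂ α δ).mp hδ
      exact ⟨γ, ha, (FRelComp_cons hk σ e t γ β).mpr ⟨δ, hb, he⟩⟩
    · rintro ⟨γ, h1, h2⟩
      obtain ⟨δ, hb, he⟩ := (FRelComp_cons hk σ e t γ β).mp h2
      exact ⟨δ, (ih L₂ α δ).mpr ⟨γ, h1, hb⟩, he⟩

lemma comp_initial : ∀ (es : List G.E) (α β : G.Path), FRelComp hk σ es α β →
    ∀ elast, es.getLast? = some elast → α.len = k - 1 ∧ α.src = G.r elast := by
  intro es
  induction es with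
  | nil => intro α β h elast he; simp at he
  | cons e t ih =>
    intro α β hcomp elast he
    obtain ⟨γ, hγ, hrel⟩ := (FRelComp_cons hk σ e t α β).mp hcomp
    cases t with
    | nil =>
      have hαγ : α = γ := hγ
      subst hαγ
      obtain ⟨_, hlen, hsrc, _⟩ := hrel
      have : elast = e := by simpa using he.symm
      subst this
      exact ⟨hlen, hsrc⟩
    | cons b t' =>
      rw [List.getLast?_cons_cons] at he
      exact ih α γ hγ elast he

lemma comp_final (hσs : ∀ μ, (σ μ).val.src = μ.val.src) {e : G.E} {t : List G.E}
    {α β : G.Path} (hcomp : FRelComp hk σ (e :: t) α β) :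
    β.len = k - 1 ∧ β.src = G.s e := by
  obtain ⟨γ, _, hrel⟩ := (FRelComp_cons hk σ e t α β).mp hcomp
  exact ⟨hrel.1, FRel_src hk σ hσs hrel⟩

lemma comp_total (hσs : ∀ μ, (σ μ).val.src = μ.val.src) :
    ∀ (es : List G.E) (α β α' : G.Path),
    FRelComp hk σ es α β → α'.len = k - 1 → α'.src = α.src →
    ∃ β', FRelComp hk σ es α' β' := by
  intro es
  induction es with
  | nil => intro α β α' h hl hs; exact ⟨α', rfl⟩
  | cons e t ih =>
    intro α β α' hcomp hl hs
    obtain ⟨γ, hγ, hrel⟩ := (FRelComp_cons hk σ e t α β).mp hcomp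
    obtain ⟨γ', hγ'⟩ := ih α γ α' hγ hl hs
    have hγsrc : γ.src = G.r e := by
      obtain ⟨_, _, hsrc, _⟩ := hrel; exact hsrc
    have hmem : γ'.len = k - 1 ∧ γ'.src = γ.src := by
      cases t with
      | nil =>
        have h1 : α = γ := hγ
        have h2 : α' = γ' := hγ'
        subst h1; subst h2
        exact ⟨hl, hs⟩
      | cons b t' =>
        have h1 := comp_final hk σ hσs hγ
        have h2 := comp_final hk σ hσs hγ'
        exact ⟨h2.1, h2.2.trans h1.2.symm⟩
    obtain ⟨β', hβ'⟩ := exists_FRel hk σ hσs e γ' hmem.1 (hmem.2.trans hγsrc)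
    exact ⟨β', (FRelComp_cons hk σ e t α' β').mpr ⟨γ', hγ', hβ'⟩⟩

lemma finite_pairB (G : FinDirGraph) (k : ℕ) : Finite (PairB G k) := by
  haveI : Finite {l : List G.E // l.length = k - 1} :=
    Finite.of_fintype (List.Vector G.E (k - 1))
  have hinj : Function.Injective (fun p : PairB G k =>
      ((p.val.1.src, (⟨p.val.1.edges, p.prop.1⟩ : List.Vector G.E (k-1))),
       (p.val.2.src, (⟨p.val.2.edges, p.prop.2.1⟩ : List.Vector G.E (k-1))))) := by
    rintro ⟨⟨μ1, μ2⟩, hμ⟩ ⟨⟨ν1, ν2⟩, hν⟩ h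
    simp only [Prod.mk.injEq, Subtype.mk.injEq] at h
    obtain ⟨⟨h1, h2⟩, h3, h4⟩ := h
    exact Subtype.ext (Prod.ext (Path.ext' h1 (congrArg List.Vector.toList h2)) (Path.ext' h3 (congrArg List.Vector.toList h4)))
  exact Finite.of_injective _ hinj

end Lemma61Aux

section Lemma61Main

variable {G : FinDirGraph} {k : ℕ} (hk : 1 ≤ k) (σ : Equiv.Perm (PathOfLen G k))

def repList (L : List G.E) : ℕ → List G.E
  | 0 => []
  | c + 1 => L ++ repList L c

lemma repList_length (L : List G.E) : ∀ c, (repList L c).length = c * L.length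
  | 0 => by simp [repList]
  | c + 1 => by
    simp only [repList, List.length_append, repList_length L c]
    ring

lemma comp_rep (L : List G.E) (α : G.Path) (h : FRelComp hk σ L α α) :
    ∀ c, FRelComp hk σ (repList L c) α α
  | 0 => rfl
  | c + 1 => (comp_append hk σ L (repList L c) α α).mpr ⟨α, comp_rep L α h c, h⟩

lemma no_cycle (hcb : ConditionB hk σ) (p1 p2 : G.Path) (hne : p1 ≠ p2)
    (L : List G.E) (hL : L ≠ []) (h1 : FRelComp hk σ L p1 p1)
    (h2 : FRelComp hk σ L p2 p2) : False := by
  obtain ⟨m, hm1, hB⟩ := hcb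
  have hLlen : 1 ≤ L.length := List.length_pos_iff.mpr hL
  have hMlen : m ≤ (repList L m).length := by
    rw [repList_length]
    nlinarith
  have hc1 : FRelComp hk σ (repList L m) p1 p1 := comp_rep hk σ L p1 h1 m
  have hc2 : FRelComp hk σ (repList L m) p2 p2 := comp_rep hk σ L p2 h2 m
  set M := repList L m with hM
  set es := M.take m with hes
  have heslen : es.length = m := by
    rw [hes, List.length_take]
    omega
  have hesne : es ≠ [] := by
    intro h
    rw [h] at heslen
    simp at heslen
    omega
  obtain ⟨γ1, _, hc1'⟩ := (comp_append hk σ es (M.drop m) p1 p1).mp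
    (by rw [hes, List.take_append_drop]; exact hc1)
  obtain ⟨γ2, _, hc2'⟩ := (comp_append hk σ es (M.drop m) p2 p2).mp
    (by rw [hes, List.take_append_drop]; exact hc2)
  rcases hB es heslen (es.getLast hesne) (List.getLast?_eq_getLast hesne) with
    h | ⟨_, β₀, hβ₀⟩
  · exact h γ1 p1 hc1'
  · exact hne ((hβ₀ γ1 p1 hc1').trans (hβ₀ γ2 p2 hc2').symm)

lemma chain_lemma (hσs : ∀ μ, (σ μ).val.src = μ.val.src)
    (le : PairB G k → PairB G k → Prop)
    (hpo : IsPartialOrder (PairB G k) le)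
    (hdec : ∀ (e : G.E) (p q : PairB G k), p.val.1 ≠ p.val.2 →
      FRel hk σ e p.val.1 q.val.1 → FRel hk σ e p.val.2 q.val.2 → le q p ∧ q ≠ p) :
    ∀ (es : List G.E) (α α' β β' : G.Path),
      FRelComp hk σ es α β → FRelComp hk σ es α' β' →
      α.len = k - 1 → α'.len = k - 1 → α.src = α'.src →
      β = β' ∨ ∃ c : ℕ → PairB G k, (c 0).val = (β, β') ∧
        ∀ i < es.length, le (c i) (c (i + 1)) ∧ c i ≠ c (i + 1) := by
  intro es
  induction es with
  | nil =>
    intro α α' β β' h h' h1 h2 h3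
    have hb : α = β := h
    have hb' : α' = β' := h'
    subst hb; subst hb'
    by_cases he : α = α'
    · exact Or.inl he
    · refine Or.inr ⟨fun _ => ⟨(α, α'), h1, h2, h3⟩, rfl, ?_⟩
      intro i hi
      simp at hi
  | cons e t ih =>
    intro α α' β β' h h' h1 h2 h3
    obtain ⟨γ, hγ, hrel⟩ := (FRelComp_cons hk σ e t α β).mp h
    obtain ⟨γ', hγ', hrel'⟩ := (FRelComp_cons hk σ e t α' β').mp h'
    by_cases hgg : γ = γ'
    · subst hgg
      exact Or.inl (FRel_unique hk σ hrel hrel')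
    · have hγm : γ.len = k - 1 ∧ γ'.len = k - 1 ∧ γ.src = γ'.src := by
        obtain ⟨_, hl, hs, _⟩ := hrel
        obtain ⟨_, hl', hs', _⟩ := hrel'
        exact ⟨hl, hl', hs.trans hs'.symm⟩
      have hβm : β.len = k - 1 ∧ β'.len = k - 1 ∧ β.src = β'.src :=
        ⟨hrel.1, hrel'.1, (FRel_src hk σ hσs hrel).trans (FRel_src hk σ hσs hrel').symm⟩
      have hstep := hdec e ⟨(γ, γ'), hγm⟩ ⟨(β, β'), hβm⟩ hgg hrel hrel'
      rcases ih α α' γ γ' hγ hγ' h1 h2 h3 with heq | ⟨c, hc0, hchain⟩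
      · exact absurd heq hgg
      · refine Or.inr ⟨fun i => if i = 0 then ⟨(β, β'), hβm⟩ else c (i - 1), rfl, ?_⟩
        intro i hi
        rcases Nat.eq_zero_or_pos i with rfl | hipos
        · have hcp : c 0 = ⟨(γ, γ'), hγm⟩ := Subtype.ext hc0
          simp only [if_pos rfl, if_neg one_ne_zero]
          norm_num
          rw [hcp]
          exact hstep
        · obtain ⟨j, rfl⟩ : ∃ j, i = j + 1 := ⟨i - 1, by omega⟩
          have hj : j < t.length := by
            simp only [List.length_cons] at hi
            omega
          simp only [Nat.succ_ne_zero, if_false, Nat.add_sub_cancel]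
          exact hchain j hj

end Lemma61Main

end FinDirGraph


open FinDirGraph in
/-- Lemma 6.1 (conditionb). -/
theorem stmt_16 (G : FinDirGraph) (hns : G.NoSinks) (hle : G.EveryLoopHasExit)
    (k : ℕ) (hk : 1 ≤ k) (σ : Equiv.Perm (PathOfLen G k))
    (hσs : ∀ μ, (σ μ).val.src = μ.val.src) (hσr : ∀ μ, (σ μ).val.rng = μ.val.rng) :
    ConditionB hk σ ↔
      ∃ le : PairB G k → PairB G k → Prop, IsPartialOrder (PairB G k) le ∧
        -- minimal elements are exactly the diagonal pairs and the pairs based at a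
        -- vertex receiving no edge
        (∀ p : PairB G k, (∀ q, le q p → q = p) ↔
          (p.val.1 = p.val.2 ∨ ¬∃ e : G.E, G.r e = p.val.1.src)) ∧
        -- (f_e(α), f_e(β)) < (α, β) for α ≠ β in the domain of f_e
        (∀ (e : G.E) (p q : PairB G k), p.val.1 ≠ p.val.2 →
          FRel hk σ e p.val.1 q.val.1 → FRel hk σ e p.val.2 q.val.2 →
          le q p ∧ q ≠ p) := by

  constructor
  · -- forward: ConditionB → order
    intro hcb
    refine ⟨fun q p => q = p ∨ (p.val.1 ≠ p.val.2 ∧ ∃ L : List G.E, L ≠ [] ∧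
        FRelComp hk σ L p.val.1 q.val.1 ∧ FRelComp hk σ L p.val.2 q.val.2), ?_, ?_, ?_⟩
    · refine { refl := fun p => Or.inl rfl, trans := ?_, antisymm := ?_ }
      · -- transitivity
        intro a b c hab hbc
        rcases hab with rfl | ⟨hbne, L, hLne, hc1, hc2⟩
        · exact hbc
        rcases hbc with rfl | ⟨hcne, L', hL'ne, hd1, hd2⟩
        · exact Or.inr ⟨hbne, L, hLne, hc1, hc2⟩
        refine Or.inr ⟨hcne, L ++ L', ?_, ?_, ?_⟩
        · intro h
          exact hLne (List.append_eq_nil_iff.mp h).1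
        · exact (comp_append hk σ L L' c.val.1 a.val.1).mpr ⟨b.val.1, hd1, hc1⟩
        · exact (comp_append hk σ L L' c.val.2 a.val.2).mpr ⟨b.val.2, hd2, hc2⟩
      · -- antisymmetry
        intro a b hab hba
        rcases hab with rfl | ⟨hbne, L, hLne, hc1, hc2⟩
        · rfl
        rcases hba with rfl | ⟨hane, L', hL'ne, hd1, hd2⟩
        · rfl
        exact (no_cycle hk σ hcb b.val.1 b.val.2 hbne (L' ++ L)
          (fun h => hL'ne (List.append_eq_nil_iff.mp h).1)
          ((comp_append hk σ L' L b.val.1 b.val.1).mpr ⟨a.val.1, hc1, hd1⟩)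
          ((comp_append hk σ L' L b.val.2 b.val.2).mpr ⟨a.val.2, hc2, hd2⟩)).elim
    · -- minimality characterization
      intro p
      constructor
      · intro hmin
        by_contra hcon
        push_neg at hcon
        obtain ⟨hpd, e, he⟩ := hcon
        obtain ⟨β1, hβ1⟩ := exists_FRel hk σ hσs e p.val.1 p.prop.1 he.symm
        obtain ⟨β2, hβ2⟩ := exists_FRel hk σ hσs e p.val.2 p.prop.2.1
          (p.prop.2.2.symm.trans he.symm)
        have hmem : β1.len = k - 1 ∧ β2.len = k - 1 ∧ β1.src = β2.src :=
          ⟨hβ1.1, hβ2.1, (FRel_src hk σ hσs hβ1).trans (FRel_src hk σ hσs hβ2).symm⟩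
        have hle' : (fun q p => q = p ∨ (p.val.1 ≠ p.val.2 ∧ ∃ L : List G.E, L ≠ [] ∧
            FRelComp hk σ L p.val.1 q.val.1 ∧ FRelComp hk σ L p.val.2 q.val.2))
            ⟨(β1, β2), hmem⟩ p :=
          Or.inr ⟨hpd, [e], List.cons_ne_nil e [],
            ⟨p.val.1, rfl, hβ1⟩, ⟨p.val.2, rfl, hβ2⟩⟩
        have hqp := hmin ⟨(β1, β2), hmem⟩ hle'
        have e1 : β1 = p.val.1 := congrArg (fun x : PairB G k => x.val.1) hqp
        have e2 : β2 = p.val.2 := congrArg (fun x : PairB G k => x.val.2) hqp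
        exact no_cycle hk σ hcb p.val.1 p.val.2 hpd [e] (List.cons_ne_nil e [])
          ⟨p.val.1, rfl, e1 ▸ hβ1⟩ ⟨p.val.2, rfl, e2 ▸ hβ2⟩
      · intro hcase q hle'
        rcases hle' with rfl | ⟨hpd, L, hLne, hc1, hc2⟩
        · rfl
        rcases hcase with hdiag | hnoe
        · exact absurd hdiag hpd
        · exact absurd ⟨L.getLast hLne,
            (comp_initial hk σ L p.val.1 q.val.1 hc1 (L.getLast hLne)
              (List.getLast?_eq_getLast hLne)).2.symm⟩ hnoe
    · -- strict decrease
      intro e p q hpd hr1 hr2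
      refine ⟨Or.inr ⟨hpd, [e], List.cons_ne_nil e [],
        ⟨p.val.1, rfl, hr1⟩, ⟨p.val.2, rfl, hr2⟩⟩, ?_⟩
      intro hqp
      have e1 : q.val.1 = p.val.1 := congrArg (fun x : PairB G k => x.val.1) hqp
      have e2 : q.val.2 = p.val.2 := congrArg (fun x : PairB G k => x.val.2) hqp
      exact no_cycle hk σ hcb p.val.1 p.val.2 hpd [e] (List.cons_ne_nil e [])
        ⟨p.val.1, rfl, e1 ▸ hr1⟩ ⟨p.val.2, rfl, e2 ▸ hr2⟩
  · -- backward: order → ConditionB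
    rintro ⟨le, hpo, _, hdec⟩
    haveI : Finite (PairB G k) := finite_pairB G k
    haveI : Fintype (PairB G k) := Fintype.ofFinite _
    refine ⟨Fintype.card (PairB G k) + 1, by omega, ?_⟩
    set N := Fintype.card (PairB G k) with hN
    intro es hlen elast hlast
    by_cases hex : ∃ α β, FRelComp hk σ es α β
    · right
      obtain ⟨α₀, β₀, h₀⟩ := hex
      have hα₀ := comp_initial hk σ es α₀ β₀ h₀ elast hlast
      constructor
      · intro α hαl hαs
        exact comp_total hk σ hσs es α₀ β₀ α h₀ hαl (hαs.trans hα₀.2.symm)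
      · refine ⟨β₀, fun α β hc => ?_⟩
        have hα := comp_initial hk σ es α β hc elast hlast
        rcases chain_lemma hk σ hσs le hpo hdec es α α₀ β β₀ hc h₀ hα.1 hα₀.1
          (hα.2.trans hα₀.2.symm) with h | ⟨c, _, hchain⟩
        · exact h
        · exfalso
          have key : ∀ j, j ≤ N + 1 → ∀ i < j, le (c i) (c j) ∧ c i ≠ c j := by
            intro j
            induction j with
            | zero => intro _ i hi; exact absurd hi (Nat.not_lt_zero i)
            | succ j ihj =>
              intro hj i hi
              have hstep := hchain j (by omega)
              rcases Nat.lt_succ_iff_lt_or_eq.mp hi with hij | rfl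
              · obtain ⟨hle1, hne1⟩ := ihj (by omega) i hij
                refine ⟨hpo.toIsPreorder.toIsTrans.trans _ _ _ hle1 hstep.1, ?_⟩
                intro hcon
                exact hstep.2 (hpo.toAntisymm.antisymm _ _ hstep.1 (hcon ▸ hle1))
              · exact hstep
          have hinj : Function.Injective (fun i : Fin (N + 2) => c i.val) := by
            intro i j hij
            have hij' : c i.val = c j.val := hij
            by_contra hne
            have hne' : i.val ≠ j.val := fun h => hne (Fin.ext h)
            rcases Nat.lt_or_ge i.val j.val with h | h
            · exact (key j.val (by omega) i.val h).2 hij'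
            · have hji : j.val < i.val := by omega
              exact (key i.val (by omega) j.val hji).2 hij'.symm
          have hcard := Fintype.card_le_of_injective _ hinj
          rw [Fintype.card_fin] at hcard
          omega
    · left
      intro α β h
      exact hex ⟨α, β, h⟩
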